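/- Let A denote the average of f(σ,π) over all m!·n! pairs of permutations. Then the number of pairs (σ,π) with f(σ,π) ≥ A is at least (m-1)!·(n-1)!. -/

import Mathlib

open scoped Classical

lemma perm_sum_eval {t : ℕ} (i : Fin (t+1)) (g : Fin (t+1) → ℝ) :
    ∑ σ : Equiv.Perm (Fin (t+1)), g (σ i) = (Nat.factorial t : ℝ) * ∑ j, g j := by
  have h1 : ∑ σ : Equiv.Perm (Fin (t+1)), g (σ i)
      = ∑ σ : Equiv.Perm (Fin (t+1)), g (σ 0) :=
    Fintype.sum_equiv (Equiv.mulRight (Equiv.swap (0 : Fin (t+1)) i)) _ _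
      (fun σ => by simp [Equiv.Perm.mul_apply, Equiv.swap_apply_left])
  have h2 : ∑ x : Fin (t+1) × Equiv.Perm (Fin t), g (Equiv.Perm.decomposeFin.symm x 0)
      = ∑ σ : Equiv.Perm (Fin (t+1)), g (σ 0) :=
    Fintype.sum_equiv Equiv.Perm.decomposeFin.symm _ _ (fun x => rfl)
  rw [h1, ← h2]
  simp only [Equiv.Perm.decomposeFin_symm_apply_zero, Fintype.sum_prod_type,
    Finset.sum_const, Finset.card_univ, Fintype.card_perm, nsmul_eq_mul]
  rw [← Finset.mul_sum, Fintype.card_fin]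

lemma shift_sum {t : ℕ} (σ : Equiv.Perm (Fin (t+1))) (i : Fin (t+1)) (g : Fin (t+1) → ℝ) :
    ∑ a, g (σ (i + a)) = ∑ j, g j :=
  Fintype.sum_equiv ((Equiv.addLeft i).trans σ) (fun a => g (σ (i + a))) g (fun _ => rfl)

lemma total_sum {s t : ℕ} (q : Fin (s+1) → Fin (s+1) → Fin (t+1) → Fin (t+1) → ℝ)
    (c : Fin (s+1) → Fin (s+1) → ℝ) (d : Fin (t+1) → Fin (t+1) → ℝ) :
    ∑ σ : Equiv.Perm (Fin (s+1)), ∑ π : Equiv.Perm (Fin (t+1)),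
      ((∑ i, ∑ k, q i (σ i) k (π k)) + (∑ i, c i (σ i)) + (∑ k, d k (π k)))
    = (Nat.factorial s : ℝ) * (Nat.factorial t) *
      ((∑ i, ∑ j, ∑ k, ∑ l, q i j k l) + (t+1) * (∑ i, ∑ j, c i j)
        + (s+1) * (∑ k, ∑ l, d k l)) := by
  have hq : ∑ σ : Equiv.Perm (Fin (s+1)), ∑ π : Equiv.Perm (Fin (t+1)),
      (∑ i, ∑ k, q i (σ i) k (π k))
      = (Nat.factorial s : ℝ) * (Nat.factorial t) * (∑ i, ∑ j, ∑ k, ∑ l, q i j k l) := by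
    have step1 : ∀ σ : Equiv.Perm (Fin (s+1)), ∑ π : Equiv.Perm (Fin (t+1)),
        (∑ i, ∑ k, q i (σ i) k (π k))
        = ∑ i, (Nat.factorial t : ℝ) * (∑ k, ∑ l, q i (σ i) k l) := by
      intro σ
      rw [Finset.sum_comm]
      refine Finset.sum_congr rfl fun i _ => ?_
      rw [Finset.sum_comm, Finset.mul_sum]
      exact Finset.sum_congr rfl fun k _ => perm_sum_eval k (fun l => q i (σ i) k l)
    calc ∑ σ : Equiv.Perm (Fin (s+1)), ∑ π : Equiv.Perm (Fin (t+1)),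
          (∑ i, ∑ k, q i (σ i) k (π k))
        = ∑ σ : Equiv.Perm (Fin (s+1)), ∑ i, (Nat.factorial t : ℝ) *
            (∑ k, ∑ l, q i (σ i) k l) := Finset.sum_congr rfl fun σ _ => step1 σ
      _ = ∑ i, ∑ σ : Equiv.Perm (Fin (s+1)), (Nat.factorial t : ℝ) *
            (∑ k, ∑ l, q i (σ i) k l) := Finset.sum_comm
      _ = ∑ i, (Nat.factorial t : ℝ) * ∑ σ : Equiv.Perm (Fin (s+1)),
            (∑ k, ∑ l, q i (σ i) k l) := by
          exact Finset.sum_congr rfl fun i _ => (Finset.mul_sum _ _ _).symm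
      _ = ∑ i, (Nat.factorial t : ℝ) * ((Nat.factorial s : ℝ) *
            ∑ j, (∑ k, ∑ l, q i j k l)) := by
          exact Finset.sum_congr rfl fun i _ => by
            rw [perm_sum_eval i (fun j => ∑ k, ∑ l, q i j k l)]
      _ = (Nat.factorial s : ℝ) * (Nat.factorial t) * (∑ i, ∑ j, ∑ k, ∑ l, q i j k l) := by
          rw [Finset.mul_sum]; exact Finset.sum_congr rfl fun i _ => by ring
  have hc : ∑ σ : Equiv.Perm (Fin (s+1)), ∑ π : Equiv.Perm (Fin (t+1)),
      (∑ i, c i (σ i))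
      = (Nat.factorial s : ℝ) * (Nat.factorial t) * (t+1) * (∑ i, ∑ j, c i j) := by
    have : ∀ σ : Equiv.Perm (Fin (s+1)), ∑ π : Equiv.Perm (Fin (t+1)),
        (∑ i, c i (σ i)) = ((t+1).factorial : ℝ) * (∑ i, c i (σ i)) := by
      intro σ
      rw [Finset.sum_const, Finset.card_univ, Fintype.card_perm, Fintype.card_fin,
        nsmul_eq_mul]
    rw [Finset.sum_congr rfl fun σ _ => this σ, ← Finset.mul_sum, Finset.sum_comm]
    have h2 : ∑ i, ∑ σ : Equiv.Perm (Fin (s+1)), c i (σ i)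
        = (Nat.factorial s : ℝ) * ∑ i, ∑ j, c i j := by
      rw [Finset.mul_sum]
      exact Finset.sum_congr rfl fun i _ => perm_sum_eval i (c i)
    rw [h2, Nat.factorial_succ]
    push_cast
    ring
  have hd : ∑ σ : Equiv.Perm (Fin (s+1)), ∑ π : Equiv.Perm (Fin (t+1)),
      (∑ k, d k (π k))
      = (Nat.factorial s : ℝ) * (Nat.factorial t) * (s+1) * (∑ k, ∑ l, d k l) := by
    have h1 : ∀ σ : Equiv.Perm (Fin (s+1)), ∑ π : Equiv.Perm (Fin (t+1)),
        (∑ k, d k (π k)) = (Nat.factorial t : ℝ) * (∑ k, ∑ l, d k l) := by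
      intro σ
      rw [Finset.sum_comm]
      have := fun k => perm_sum_eval k (d k)
      rw [Finset.mul_sum]
      exact Finset.sum_congr rfl fun k _ => this k
    rw [Finset.sum_congr rfl fun σ _ => h1 σ, Finset.sum_const, Finset.card_univ,
      Fintype.card_perm, Fintype.card_fin, nsmul_eq_mul, Nat.factorial_succ]
    push_cast
    ring
  simp only [Finset.sum_add_distrib, hq, hc, hd]
  ring

lemma class_sum {s t : ℕ} (q : Fin (s+1) → Fin (s+1) → Fin (t+1) → Fin (t+1) → ℝ)
    (c : Fin (s+1) → Fin (s+1) → ℝ) (d : Fin (t+1) → Fin (t+1) → ℝ)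
    (σ : Equiv.Perm (Fin (s+1))) (π : Equiv.Perm (Fin (t+1))) :
    ∑ a : Fin (s+1), ∑ b : Fin (t+1),
      ((∑ i, ∑ k, q i (σ (i + a)) k (π (k + b))) + (∑ i, c i (σ (i + a)))
        + (∑ k, d k (π (k + b))))
    = (∑ i, ∑ j, ∑ k, ∑ l, q i j k l) + (t+1) * (∑ i, ∑ j, c i j)
        + (s+1) * (∑ k, ∑ l, d k l) := by
  have hq : ∑ a : Fin (s+1), ∑ b : Fin (t+1), ∑ i, ∑ k, q i (σ (i + a)) k (π (k + b))
      = ∑ i, ∑ j, ∑ k, ∑ l, q i j k l := by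
    have step1 : ∀ a : Fin (s+1), ∑ b : Fin (t+1), ∑ i, ∑ k, q i (σ (i + a)) k (π (k + b))
        = ∑ i, ∑ k, ∑ l, q i (σ (i + a)) k l := by
      intro a
      rw [Finset.sum_comm]
      refine Finset.sum_congr rfl fun i _ => ?_
      rw [Finset.sum_comm]
      exact Finset.sum_congr rfl fun k _ => shift_sum π k (fun l => q i (σ (i + a)) k l)
    rw [Finset.sum_congr rfl fun a _ => step1 a, Finset.sum_comm]
    exact Finset.sum_congr rfl fun i _ => shift_sum σ i (fun j => ∑ k, ∑ l, q i j k l)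
  have hc : ∑ a : Fin (s+1), ∑ b : Fin (t+1), ∑ i, c i (σ (i + a))
      = (t+1 : ℝ) * ∑ i, ∑ j, c i j := by
    have step1 : ∀ a : Fin (s+1), ∑ b : Fin (t+1), ∑ i, c i (σ (i + a))
        = (t+1 : ℝ) * ∑ i, c i (σ (i + a)) := fun a => by
      rw [Finset.sum_const, Finset.card_univ, Fintype.card_fin, nsmul_eq_mul]; push_cast; ring
    rw [Finset.sum_congr rfl fun a _ => step1 a, ← Finset.mul_sum, Finset.sum_comm]
    congr 1
    exact Finset.sum_congr rfl fun i _ => shift_sum σ i (c i)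
  have hd : ∑ a : Fin (s+1), ∑ b : Fin (t+1), ∑ k, d k (π (k + b))
      = (s+1 : ℝ) * ∑ k, ∑ l, d k l := by
    have step1 : ∀ a : Fin (s+1), ∑ b : Fin (t+1), ∑ k, d k (π (k + b))
        = ∑ k, ∑ l, d k l := fun a => by
      rw [Finset.sum_comm]
      exact Finset.sum_congr rfl fun k _ => shift_sum π k (d k)
    rw [Finset.sum_congr rfl fun a _ => step1 a, Finset.sum_const, Finset.card_univ,
      Fintype.card_fin, nsmul_eq_mul]
    push_cast; ring
  simp only [Finset.sum_add_distrib, hq, hc, hd]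

theorem stmt_2 (m n : ℕ) (hm : 0 < m) (hn : 0 < n)
    (q : Fin m → Fin m → Fin n → Fin n → ℝ)
    (c : Fin m → Fin m → ℝ) (d : Fin n → Fin n → ℝ)
    (f : Equiv.Perm (Fin m) → Equiv.Perm (Fin n) → ℝ)
    (hf : ∀ σ π, f σ π =
      (∑ i, ∑ k, q i (σ i) k (π k)) + (∑ i, c i (σ i)) + (∑ k, d k (π k)))
    (A : ℝ)
    (hA : A = (∑ σ : Equiv.Perm (Fin m), ∑ π : Equiv.Perm (Fin n), f σ π)
        / ((Nat.factorial m * Nat.factorial n : ℕ) : ℝ)) :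
    Nat.factorial (m - 1) * Nat.factorial (n - 1) ≤
      (Finset.univ.filter
        (fun p : Equiv.Perm (Fin m) × Equiv.Perm (Fin n) => A ≤ f p.1 p.2)).card := by
  obtain ⟨s, rfl⟩ : ∃ s, m = s + 1 := ⟨m - 1, by omega⟩
  obtain ⟨t, rfl⟩ : ∃ t, n = t + 1 := ⟨n - 1, by omega⟩
  set E : ℝ := (∑ i, ∑ j, ∑ k, ∑ l, q i j k l) + (t+1) * (∑ i, ∑ j, c i j)
      + (s+1) * (∑ k, ∑ l, d k l) with hE
  have htot : ∑ σ : Equiv.Perm (Fin (s+1)), ∑ π : Equiv.Perm (Fin (t+1)), f σ π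
      = (Nat.factorial s : ℝ) * (Nat.factorial t) * E := by
    rw [show (∑ σ : Equiv.Perm (Fin (s+1)), ∑ π : Equiv.Perm (Fin (t+1)), f σ π)
      = ∑ σ : Equiv.Perm (Fin (s+1)), ∑ π : Equiv.Perm (Fin (t+1)),
        ((∑ i, ∑ k, q i (σ i) k (π k)) + (∑ i, c i (σ i)) + (∑ k, d k (π k))) from
      Finset.sum_congr rfl fun σ _ => Finset.sum_congr rfl fun π _ => hf σ π]
    exact total_sum q c d
  have hsfac : (Nat.factorial s : ℝ) ≠ 0 := Nat.cast_ne_zero.mpr s.factorial_ne_zero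
  have htfac : (Nat.factorial t : ℝ) ≠ 0 := Nat.cast_ne_zero.mpr t.factorial_ne_zero
  have hcastfac : (((s+1).factorial * (t+1).factorial : ℕ) : ℝ)
      = ((s : ℝ)+1) * ((t : ℝ)+1) * ((Nat.factorial s : ℝ) * (Nat.factorial t)) := by
    rw [Nat.factorial_succ, Nat.factorial_succ]; push_cast; ring
  have hAE : A * (((s : ℝ)+1) * ((t : ℝ)+1)) = E := by
    rw [hA, htot, hcastfac]
    have hs1 : ((s : ℝ)+1) ≠ 0 := by positivity
    have ht1 : ((t : ℝ)+1) ≠ 0 := by positivity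
    field_simp
  -- existence of a good shift in each class
  have hex : ∀ p : Equiv.Perm (Fin (s+1)) × Equiv.Perm (Fin (t+1)),
      ∃ ab : Fin (s+1) × Fin (t+1),
        A ≤ f (p.1 * Equiv.addRight ab.1) (p.2 * Equiv.addRight ab.2) := by
    intro p
    by_contra h
    push_neg at h
    have hsum : ∑ a : Fin (s+1), ∑ b : Fin (t+1),
        f (p.1 * Equiv.addRight a) (p.2 * Equiv.addRight b) = E := by
      have hab : ∀ (a : Fin (s+1)) (b : Fin (t+1)),
          f (p.1 * Equiv.addRight a) (p.2 * Equiv.addRight b)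
          = (∑ i, ∑ k, q i (p.1 (i + a)) k (p.2 (k + b))) + (∑ i, c i (p.1 (i + a)))
            + (∑ k, d k (p.2 (k + b))) := by
        intro a b
        rw [hf]
        simp [Equiv.Perm.mul_apply]
      rw [Finset.sum_congr rfl fun a _ => Finset.sum_congr rfl fun b _ => hab a b]
      exact class_sum q c d p.1 p.2
    have hlt : ∑ a : Fin (s+1), ∑ b : Fin (t+1),
        f (p.1 * Equiv.addRight a) (p.2 * Equiv.addRight b)
        < ∑ a : Fin (s+1), ∑ b : Fin (t+1), A := by
      refine Finset.sum_lt_sum_of_nonempty Finset.univ_nonempty fun a _ => ?_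
      exact Finset.sum_lt_sum_of_nonempty Finset.univ_nonempty fun b _ => h (a, b)
    have hconst : ∑ _a : Fin (s+1), ∑ _b : Fin (t+1), A
        = A * (((s : ℝ)+1) * ((t : ℝ)+1)) := by
      simp only [Finset.sum_const, Finset.card_univ, Fintype.card_fin, nsmul_eq_mul]
      push_cast; ring
    rw [hsum, hconst, hAE] at hlt
    exact lt_irrefl E hlt
  choose ab hab using hex
  set w : Equiv.Perm (Fin (s+1)) × Equiv.Perm (Fin (t+1)) →
      Equiv.Perm (Fin (s+1)) × Equiv.Perm (Fin (t+1)) :=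
    fun p => (p.1 * Equiv.addRight (ab p).1, p.2 * Equiv.addRight (ab p).2) with hw
  set T := Finset.univ.filter
      (fun p : Equiv.Perm (Fin (s+1)) × Equiv.Perm (Fin (t+1)) => A ≤ f p.1 p.2) with hT
  have hmaps : ∀ p ∈ (Finset.univ : Finset (Equiv.Perm (Fin (s+1)) × Equiv.Perm (Fin (t+1)))),
      w p ∈ T := fun p _ => Finset.mem_filter.mpr ⟨Finset.mem_univ _, hab p⟩
  have hfib : ∀ x ∈ T, (Finset.univ.filter fun p => w p = x).card ≤ (s+1) * (t+1) := by
    intro x _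
    have hsub : (Finset.univ.filter fun p => w p = x) ⊆
        Finset.image (fun ab : Fin (s+1) × Fin (t+1) =>
          (x.1 * (Equiv.addRight ab.1)⁻¹, x.2 * (Equiv.addRight ab.2)⁻¹)) Finset.univ := by
      intro p hp
      have hx : w p = x := (Finset.mem_filter.mp hp).2
      refine Finset.mem_image.mpr ⟨ab p, Finset.mem_univ _, ?_⟩
      have h1 : x.1 = p.1 * Equiv.addRight (ab p).1 := by rw [← hx]
      have h2 : x.2 = p.2 * Equiv.addRight (ab p).2 := by rw [← hx]
      rw [h1, h2]
      ext1 <;> (simp [mul_assoc]) <;> (ext z; simp [Equiv.Perm.mul_apply])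
    calc (Finset.univ.filter fun p => w p = x).card
        ≤ _ := Finset.card_le_card hsub
      _ ≤ (Finset.univ : Finset (Fin (s+1) × Fin (t+1))).card := Finset.card_image_le
      _ = (s+1) * (t+1) := by simp
  have hmain : (Finset.univ :
        Finset (Equiv.Perm (Fin (s+1)) × Equiv.Perm (Fin (t+1)))).card
      ≤ (s+1) * (t+1) * T.card :=
    Finset.card_le_mul_card_image_of_maps_to hmaps _ hfib
  have hcardu : (Finset.univ :
        Finset (Equiv.Perm (Fin (s+1)) × Equiv.Perm (Fin (t+1)))).card
      = (s+1) * (t+1) * (Nat.factorial s * Nat.factorial t) := by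
    simp [Fintype.card_perm, Fintype.card_fin, Nat.factorial_succ]
    ring
  rw [hcardu] at hmain
  have := Nat.le_of_mul_le_mul_left hmain (by positivity : 0 < (s+1) * (t+1))
  simpa using this
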